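/- For any v ∈ L²(a,b) and h > 0, there exists a unique minimizer u ∈ BV(a,b) (with the prescribed boundary values) of J_{h,v}(u) = h·∫_a^b |Du| + (1/2)∫_a^b (u-v)² dx, and moreover the total variation of u satisfies ∫_a^b |Du| ≤ |B - A| + (1/(2h))∫_a^b (v - ℓ)² dx, where ℓ is the affine function with ℓ(a)=A, ℓ(b)=B. -/

import Mathlib

open MeasureTheory Set Filter Topology
open scoped ENNReal NNReal Classical


lemma selection_countable {C : ℝ} {D : Set ℝ} (hD : D.Countable) (F : ℕ → ℝ → ℝ)
    (hbd : ∀ n, ∀ x ∈ D, F n x ∈ Icc (-C) C) :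
    ∃ φ : ℕ → ℕ, StrictMono φ ∧ ∃ g : ℝ → ℝ,
      ∀ x ∈ D, Tendsto (fun n => F (φ n) x) atTop (𝓝 (g x)) := by
  haveI := hD.to_subtype
  let T : ℕ → (D → (Icc (-C) C : Set ℝ)) := fun n d => ⟨F n d, hbd n d d.2⟩
  obtain ⟨L, φ, hφ, hconv⟩ := CompactSpace.tendsto_subseq T
  refine ⟨φ, hφ, fun x => if hx : x ∈ D then (L ⟨x, hx⟩ : ℝ) else 0, fun x hx => ?_⟩
  have h1 : Tendsto (fun n => T (φ n) ⟨x, hx⟩) atTop (𝓝 (L ⟨x, hx⟩)) :=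
    (continuous_apply _).continuousAt.tendsto.comp hconv
  have h2 : Tendsto (fun n => ((T (φ n) ⟨x, hx⟩ : ℝ))) atTop (𝓝 ((L ⟨x, hx⟩ : ℝ))) :=
    (continuous_subtype_val.tendsto _).comp h1
  simpa [T, hx] using h2

lemma helly_mono {a b C : ℝ} (hab : a ≤ b) (F : ℕ → ℝ → ℝ)
    (hmono : ∀ n, MonotoneOn (F n) (Icc a b))
    (hbd : ∀ n, ∀ x ∈ Icc a b, |F n x| ≤ C) :
    ∃ φ : ℕ → ℕ, StrictMono φ ∧ ∃ g : ℝ → ℝ,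
      ∀ x ∈ Icc a b, Tendsto (fun n => F (φ n) x) atTop (𝓝 (g x)) := by
  have ha : a ∈ Icc a b := left_mem_Icc.2 hab
  have hb : b ∈ Icc a b := right_mem_Icc.2 hab
  set D : Set ℝ := (Icc a b ∩ Set.range ((↑) : ℚ → ℝ)) ∪ {a, b} with hD
  have hDsub : D ⊆ Icc a b := by
    rintro x (⟨hx, -⟩ | hx)
    · exact hx
    · rcases hx with rfl | rfl <;> assumption
  have haD : a ∈ D := Or.inr (Or.inl rfl)
  have hbD : b ∈ D := Or.inr (Or.inr rfl)
  have hDc : D.Countable :=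
    (Set.Countable.mono inter_subset_right (Set.countable_range _)).union
      (((Set.finite_singleton b).insert a).countable)
  obtain ⟨φ₁, hφ₁, g₁, hg₁⟩ := selection_countable hDc F
    (fun n x hx => abs_le.1 (hbd n x (hDsub hx)))
  have hg₁mono : ∀ x ∈ D, ∀ y ∈ D, x ≤ y → g₁ x ≤ g₁ y := by
    intro x hx y hy hxy
    exact le_of_tendsto_of_tendsto' (hg₁ x hx) (hg₁ y hy)
      (fun n => hmono (φ₁ n) (hDsub hx) (hDsub hy) hxy)
  have hg₁bd : ∀ x ∈ D, g₁ x ≤ C ∧ -C ≤ g₁ x := by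
    intro x hx
    constructor
    · exact le_of_tendsto (hg₁ x hx)
        (Eventually.of_forall fun n => (abs_le.1 (hbd _ x (hDsub hx))).2)
    · exact ge_of_tendsto (hg₁ x hx)
        (Eventually.of_forall fun n => (abs_le.1 (hbd _ x (hDsub hx))).1)
  set L : ℝ → ℝ := fun x => sSup (g₁ '' (D ∩ Iic x)) with hLdef
  set U : ℝ → ℝ := fun x => sInf (g₁ '' (D ∩ Ici x)) with hUdef
  have hbddA : ∀ x, BddAbove (g₁ '' (D ∩ Iic x)) := by
    intro x
    refine ⟨C, ?_⟩
    rintro _ ⟨d, ⟨hd, -⟩, rfl⟩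
    exact (hg₁bd d hd).1
  have hbddB : ∀ x, BddBelow (g₁ '' (D ∩ Ici x)) := by
    intro x
    refine ⟨-C, ?_⟩
    rintro _ ⟨d, ⟨hd, -⟩, rfl⟩
    exact (hg₁bd d hd).2
  have hneL : ∀ x ∈ Icc a b, (D ∩ Iic x).Nonempty := fun x hx => ⟨a, haD, hx.1⟩
  have hneU : ∀ x ∈ Icc a b, (D ∩ Ici x).Nonempty := fun x hx => ⟨b, hbD, hx.2⟩
  have hLU : ∀ x ∈ Icc a b, L x ≤ U x := by
    intro x hx
    apply csSup_le ((hneL x hx).image _)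
    rintro _ ⟨d, ⟨hd, hdx⟩, rfl⟩
    apply le_csInf ((hneU x hx).image _)
    rintro _ ⟨d', ⟨hd', hxd'⟩, rfl⟩
    exact hg₁mono d hd d' hd' (le_trans hdx hxd')
  have hkey : ∀ x ∈ Icc a b, L x = U x →
      Tendsto (fun n => F (φ₁ n) x) atTop (𝓝 (L x)) := by
    intro x hx hLUx
    rw [Metric.tendsto_atTop]
    intro ε hε
    obtain ⟨_, ⟨d, ⟨hdD, hdx⟩, rfl⟩, hdgt⟩ :=
      exists_lt_of_lt_csSup ((hneL x hx).image g₁) (show L x - ε/2 < L x by linarith)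
    obtain ⟨_, ⟨d', ⟨hd'D, hxd'⟩, rfl⟩, hd'lt⟩ :=
      exists_lt_of_csInf_lt ((hneU x hx).image g₁) (show U x < U x + ε/2 by linarith)
    have h1 : ∀ᶠ n in atTop, L x - ε/2 < F (φ₁ n) d :=
      (hg₁ d hdD).eventually_const_lt hdgt
    have h2 : ∀ᶠ n in atTop, F (φ₁ n) d' < U x + ε/2 :=
      (hg₁ d' hd'D).eventually_lt_const hd'lt
    obtain ⟨N, hN⟩ := eventually_atTop.1 (h1.and h2)
    refine ⟨N, fun n hn => ?_⟩
    obtain ⟨hN1, hN2⟩ := hN n hn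
    have hd1 : F (φ₁ n) d ≤ F (φ₁ n) x := hmono (φ₁ n) (hDsub hdD) hx hdx
    have hd2 : F (φ₁ n) x ≤ F (φ₁ n) d' := hmono (φ₁ n) hx (hDsub hd'D) hxd'
    have hup : F (φ₁ n) x < U x + ε/2 := lt_of_le_of_lt hd2 hN2
    rw [← hLUx] at hup
    have hlo : L x - ε/2 < F (φ₁ n) x := lt_of_lt_of_le hN1 hd1
    rw [Real.dist_eq, abs_lt]
    constructor <;> linarith
  set E : Set ℝ := {x | x ∈ Icc a b ∧ L x < U x} with hEdef
  have hEc : E.Countable := by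
    have hex : ∀ x : E, ∃ q : ℚ, L x < q ∧ (q : ℝ) < U x := fun x => exists_rat_btwn x.2.2
    choose q hq1 hq2 using hex
    have hmono' : ∀ x y : E, (x : ℝ) < (y : ℝ) → (q x : ℝ) < (q y : ℝ) := by
      intro x y hxy
      obtain ⟨r, hr1, hr2⟩ := exists_rat_btwn hxy
      have hrD : (r : ℝ) ∈ D :=
        Or.inl ⟨⟨x.2.1.1.trans hr1.le, hr2.le.trans y.2.1.2⟩, ⟨r, rfl⟩⟩
      have h2 : U (x : ℝ) ≤ g₁ r := csInf_le (hbddB _) ⟨r, ⟨hrD, hr1.le⟩, rfl⟩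
      have h3 : g₁ r ≤ L (y : ℝ) := le_csSup (hbddA _) ⟨r, ⟨hrD, hr2.le⟩, rfl⟩
      have h1 : (q x : ℝ) < U (x : ℝ) := hq2 x
      have h4 : L (y : ℝ) < q y := hq1 y
      linarith
    have hinj : Function.Injective q := by
      intro x y hxy
      rcases lt_trichotomy (x : ℝ) (y : ℝ) with hlt | heq | hgt
      · exact absurd (hmono' x y hlt) (by simp [hxy])
      · exact Subtype.ext heq
      · exact absurd (hmono' y x hgt) (by simp [hxy])
    exact Set.countable_iff_exists_injective.2
      ⟨fun x => Encodable.encode (q x), fun x y hxy => hinj (Encodable.encode_injective hxy)⟩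
  obtain ⟨φ₂, hφ₂, g₂, hg₂⟩ := selection_countable hEc (fun n => F (φ₁ n))
    (fun n x hx => abs_le.1 (hbd (φ₁ n) x hx.1))
  refine ⟨φ₁ ∘ φ₂, hφ₁.comp hφ₂, fun x => if x ∈ E then g₂ x else L x, fun x hx => ?_⟩
  by_cases hxE : x ∈ E
  · simpa [hxE] using hg₂ x hxE
  · have hLUx : L x = U x :=
      le_antisymm (hLU x hx) (not_lt.1 fun hc => hxE ⟨hx, hc⟩)
    have := (hkey x hx hLUx).comp hφ₂.tendsto_atTop
    simpa [hxE, Function.comp_def] using this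

lemma evar_le_of_tendsto {F : ℕ → ℝ → ℝ} {g : ℝ → ℝ} {s : Set ℝ}
    (hconv : ∀ x ∈ s, Tendsto (fun n => F n x) atTop (𝓝 (g x)))
    {C : ℝ≥0∞} (hC : ∀ᶠ n in atTop, eVariationOn (F n) s ≤ C) :
    eVariationOn g s ≤ C := by
  by_contra hlt
  push_neg at hlt
  have h := eVariationOn.lowerSemicontinuous_aux (p := atTop) hconv hlt
  obtain ⟨n, h1, h2⟩ := (h.and hC).exists
  exact absurd (h1.trans_le h2) (lt_irrefl _)

lemma evar_neg (f : ℝ → ℝ) (s : Set ℝ) :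
    eVariationOn (fun x => - f x) s = eVariationOn f s := by
  have key : ∀ (f : ℝ → ℝ), eVariationOn f s ≤ eVariationOn (fun x => - f x) s := by
    intro f
    apply iSup_le
    rintro ⟨n, u, hu, us⟩
    refine le_trans (le_of_eq ?_) (eVariationOn.sum_le (n := n) hu us)
    exact Finset.sum_congr rfl fun i _ => (edist_neg_neg _ _).symm
  refine le_antisymm ?_ (key f)
  have := key (fun x => - f x)
  simpa using this

lemma evar_midpoint_le (f g : ℝ → ℝ) (s : Set ℝ) :
    eVariationOn (fun x => (f x + g x) / 2) s
      ≤ eVariationOn f s * 2⁻¹ + eVariationOn g s * 2⁻¹ := by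
  apply iSup_le
  rintro ⟨n, u, hu, us⟩
  have hpt : ∀ i, edist ((f (u (i+1)) + g (u (i+1))) / 2) ((f (u i) + g (u i)) / 2)
      ≤ edist (f (u (i+1))) (f (u i)) * 2⁻¹ + edist (g (u (i+1))) (g (u i)) * 2⁻¹ := by
    intro i
    rw [edist_dist, edist_dist, edist_dist, Real.dist_eq, Real.dist_eq, Real.dist_eq]
    have h2 : (2⁻¹ : ℝ≥0∞) = ENNReal.ofReal (2⁻¹ : ℝ) := by
      rw [ENNReal.ofReal_inv_of_pos two_pos]
      norm_num
    rw [h2, ← ENNReal.ofReal_mul (abs_nonneg _), ← ENNReal.ofReal_mul (abs_nonneg _),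
      ← ENNReal.ofReal_add (by positivity) (by positivity)]
    apply ENNReal.ofReal_le_ofReal
    have heq : (f (u (i+1)) + g (u (i+1))) / 2 - (f (u i) + g (u i)) / 2
        = (f (u (i+1)) - f (u i)) / 2 + (g (u (i+1)) - g (u i)) / 2 := by ring
    rw [heq]
    calc |(f (u (i+1)) - f (u i)) / 2 + (g (u (i+1)) - g (u i)) / 2|
        ≤ |(f (u (i+1)) - f (u i)) / 2| + |(g (u (i+1)) - g (u i)) / 2| := abs_add_le _ _
      _ = |f (u (i+1)) - f (u i)| * 2⁻¹ + |g (u (i+1)) - g (u i)| * 2⁻¹ := by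
          rw [abs_div, abs_div]
          norm_num
          ring
  calc ∑ i ∈ Finset.range n, edist ((f (u (i+1)) + g (u (i+1))) / 2) ((f (u i) + g (u i)) / 2)
      ≤ ∑ i ∈ Finset.range n, (edist (f (u (i+1))) (f (u i)) * 2⁻¹
          + edist (g (u (i+1))) (g (u i)) * 2⁻¹) := Finset.sum_le_sum fun i _ => hpt i
    _ = (∑ i ∈ Finset.range n, edist (f (u (i+1))) (f (u i))) * 2⁻¹
          + (∑ i ∈ Finset.range n, edist (g (u (i+1))) (g (u i))) * 2⁻¹ := by
        rw [Finset.sum_add_distrib, Finset.sum_mul, Finset.sum_mul]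
    _ ≤ eVariationOn f s * 2⁻¹ + eVariationOn g s * 2⁻¹ := by
        gcongr
        · exact eVariationOn.sum_le (n := n) hu us
        · exact eVariationOn.sum_le (n := n) hu us

section Helpers
variable {a b : ℝ}

lemma isFiniteIoo {a b : ℝ} : IsFiniteMeasure (volume.restrict (Ioo a b)) := by
  constructor
  rw [Measure.restrict_apply_univ, Real.volume_Ioo]
  exact ENNReal.ofReal_lt_top

lemma bv_aemeas (hab : a ≤ b) {f : ℝ → ℝ} (hf : BoundedVariationOn f (Icc a b)) :
    AEMeasurable f (volume.restrict (Ioo a b)) := by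
  obtain ⟨p, q, hp, hq, hpq⟩ :=
    hf.locallyBoundedVariationOn.exists_monotoneOn_sub_monotoneOn
  have hp' : AEMeasurable p (volume.restrict (Ioo a b)) :=
    aemeasurable_restrict_of_monotoneOn measurableSet_Ioo (hp.mono Ioo_subset_Icc_self)
  have hq' : AEMeasurable q (volume.restrict (Ioo a b)) :=
    aemeasurable_restrict_of_monotoneOn measurableSet_Ioo (hq.mono Ioo_subset_Icc_self)
  have : f = fun x => p x - q x := by rw [hpq]; rfl
  rw [this]
  exact hp'.sub hq'

lemma bv_bound (hab : a ≤ b) {f : ℝ → ℝ} (hf : BoundedVariationOn f (Icc a b)) {x : ℝ}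
    (hx : x ∈ Icc a b) : |f x| ≤ |f a| + (eVariationOn f (Icc a b)).toReal := by
  have h1 := hf.dist_le hx (left_mem_Icc.2 hab)
  rw [Real.dist_eq] at h1
  have h2 : |f x| ≤ |f a| + |f x - f a| := by
    calc |f x| = |f a + (f x - f a)| := by ring_nf
      _ ≤ |f a| + |f x - f a| := abs_add_le _ _
  linarith

lemma bv_memL2 (hab : a ≤ b) {f : ℝ → ℝ} (hf : BoundedVariationOn f (Icc a b)) :
    MemLp f 2 (volume.restrict (Ioo a b)) := by
  haveI := isFiniteIoo (a := a) (b := b)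
  refine MemLp.of_bound (bv_aemeas hab hf).aestronglyMeasurable
    (|f a| + (eVariationOn f (Icc a b)).toReal) ?_
  filter_upwards [ae_restrict_mem measurableSet_Ioo] with x hx
  simpa [Real.norm_eq_abs] using bv_bound hab hf (Ioo_subset_Icc_self hx)

lemma intInt_eq (hab : a ≤ b) (f : ℝ → ℝ) :
    ∫ x in a..b, f x = ∫ x in Ioo a b, f x := by
  rw [intervalIntegral.integral_of_le hab, ← Measure.restrict_congr_set Ioo_ae_eq_Ioc]

end Helpers

lemma evar_neg' (f : ℝ → ℝ) (s : Set ℝ) :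
    eVariationOn (fun x => - f x) s = eVariationOn f s := by
  have key : ∀ (f : ℝ → ℝ), eVariationOn f s ≤ eVariationOn (fun x => - f x) s := by
    intro f
    apply iSup_le
    rintro ⟨n, u, hu, us⟩
    refine le_trans (le_of_eq ?_) (eVariationOn.sum_le (n := n) hu us)
    exact Finset.sum_congr rfl fun i _ => (edist_neg_neg _ _).symm
  refine le_antisymm ?_ (key f)
  have := key (fun x => - f x)
  simpa using this

lemma evar_affine {a b : ℝ} (hab : a < b) (A B : ℝ) :
    eVariationOn (fun x => A + (B - A) * (x - a) / (b - a)) (Icc a b)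
      ≤ ENNReal.ofReal |B - A| := by
  have hba : (0:ℝ) < b - a := by linarith
  have hla : A + (B - A) * (a - a) / (b - a) = A := by
    simp
  have hlb : A + (B - A) * (b - a) / (b - a) = B := by
    field_simp
    ring
  rcases le_total A B with hAB | hBA
  · have hm : MonotoneOn (fun x => A + (B - A) * (x - a) / (b - a)) (Icc a b) := by
      intro x _ y _ hxy
      dsimp only
      have h1 : (B - A) * (x - a) ≤ (B - A) * (y - a) := by nlinarith
      exact (add_le_add_iff_left A).2 ((div_le_div_iff_of_pos_right hba).2 h1)
    have h := hm.eVariationOn_le (left_mem_Icc.2 hab.le) (right_mem_Icc.2 hab.le)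
    rw [inter_self] at h
    refine h.trans (le_of_eq ?_)
    rw [hla, hlb, abs_of_nonneg (by linarith)]
  · have hm : MonotoneOn (fun x => - (A + (B - A) * (x - a) / (b - a))) (Icc a b) := by
      intro x _ y _ hxy
      dsimp only
      have h1 : (B - A) * (y - a) ≤ (B - A) * (x - a) := by nlinarith
      have h2 := (div_le_div_iff_of_pos_right hba).2 h1
      linarith
    have h := hm.eVariationOn_le (left_mem_Icc.2 hab.le) (right_mem_Icc.2 hab.le)
    rw [inter_self] at h
    rw [← evar_neg']
    refine h.trans (le_of_eq ?_)
    rw [hla, hlb, abs_of_nonpos (by linarith)]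
    ring_nf


lemma fid_tendsto {a b C : ℝ} (hab : a < b) {v : ℝ → ℝ}
    (hv : MemLp v 2 (volume.restrict (Ioo a b)))
    {F : ℕ → ℝ → ℝ} {g : ℝ → ℝ}
    (hmeas : ∀ n, AEMeasurable (F n) (volume.restrict (Ioo a b)))
    (hbd : ∀ n, ∀ x ∈ Icc a b, |F n x| ≤ C)
    (hconv : ∀ x ∈ Icc a b, Tendsto (fun n => F n x) atTop (𝓝 (g x))) :
    Tendsto (fun n => ∫ x in Ioo a b, (F n x - v x) ^ 2) atTop
      (𝓝 (∫ x in Ioo a b, (g x - v x) ^ 2)) := by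
  haveI : IsFiniteMeasure (volume.restrict (Ioo a b)) := isFiniteIoo
  have hC0 : 0 ≤ C := (abs_nonneg _).trans (hbd 0 a (left_mem_Icc.2 hab.le))
  have hvm : AEStronglyMeasurable v (volume.restrict (Ioo a b)) := hv.1
  apply tendsto_integral_of_dominated_convergence (fun x => (C + |v x|) ^ 2)
  · intro n
    have h1 : AEMeasurable (fun x => F n x - v x) (volume.restrict (Ioo a b)) :=
      (hmeas n).sub hvm.aemeasurable
    have h2 : (fun x => (F n x - v x) ^ 2)
        = fun x => (F n x - v x) * (F n x - v x) := by funext x; ring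
    rw [h2]
    exact (h1.mul h1).aestronglyMeasurable
  · have h2 : MemLp (fun x => C + |v x|) 2 (volume.restrict (Ioo a b)) := by
      have habs : MemLp (fun x => |v x|) 2 (volume.restrict (Ioo a b)) := hv.abs
      exact (memLp_const C).add habs
    exact h2.integrable_sq
  · intro n
    filter_upwards [ae_restrict_mem measurableSet_Ioo] with x hx
    have h1 : |F n x - v x| ≤ C + |v x| := by
      have := hbd n x (Ioo_subset_Icc_self hx)
      calc |F n x - v x| ≤ |F n x| + |v x| := abs_sub _ _
        _ ≤ C + |v x| := by linarith
    rw [Real.norm_eq_abs, abs_of_nonneg (sq_nonneg _)]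
    calc (F n x - v x) ^ 2 = |F n x - v x| ^ 2 := (sq_abs _).symm
      _ ≤ (C + |v x|) ^ 2 := by
          apply pow_le_pow_left₀ (abs_nonneg _) h1
  · filter_upwards [ae_restrict_mem measurableSet_Ioo] with x hx
    exact ((hconv x (Ioo_subset_Icc_self hx)).sub_const (v x)).pow 2

noncomputable def Jfun (a b h : ℝ) (v : ℝ → ℝ) (f : ℝ → ℝ) : ℝ :=
  h * (eVariationOn f (Icc a b)).toReal + (1 / 2) * ∫ x in a..b, (f x - v x) ^ 2


set_option maxHeartbeats 1000000 in
theorem exists_unique_minimizer_Jhv (a b A B h : ℝ) (hab : a < b) (hh : 0 < h)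
    (v : ℝ → ℝ) (hv : MemLp v 2 (volume.restrict (Ioo a b))) :
    ∃ u : ℝ → ℝ,
      (BoundedVariationOn u (Icc a b) ∧ u a = A ∧ u b = B) ∧
      (∀ w : ℝ → ℝ, BoundedVariationOn w (Icc a b) → w a = A → w b = B →
        h * (eVariationOn u (Icc a b)).toReal + (1 / 2) * ∫ x in a..b, (u x - v x) ^ 2
          ≤ h * (eVariationOn w (Icc a b)).toReal + (1 / 2) * ∫ x in a..b, (w x - v x) ^ 2) ∧
      (eVariationOn u (Icc a b)).toReal
        ≤ |B - A| + (1 / (2 * h)) *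
            ∫ x in a..b, (v x - (A + (B - A) * (x - a) / (b - a))) ^ 2 ∧
      (∀ u' : ℝ → ℝ, (BoundedVariationOn u' (Icc a b) ∧ u' a = A ∧ u' b = B) →
        (∀ w : ℝ → ℝ, BoundedVariationOn w (Icc a b) → w a = A → w b = B →
          h * (eVariationOn u' (Icc a b)).toReal + (1 / 2) * ∫ x in a..b, (u' x - v x) ^ 2
            ≤ h * (eVariationOn w (Icc a b)).toReal + (1 / 2) * ∫ x in a..b, (w x - v x) ^ 2) →
        ∀ᵐ x ∂(volume.restrict (Ioo a b)), u' x = u x) := by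
  haveI : IsFiniteMeasure (volume.restrict (Ioo a b)) := isFiniteIoo
  have haI : a ∈ Icc a b := left_mem_Icc.2 hab.le
  have hbI : b ∈ Icc a b := right_mem_Icc.2 hab.le
  -- the affine competitor
  have hla : A + (B - A) * (a - a) / (b - a) = A := by simp
  have hlb : A + (B - A) * (b - a) / (b - a) = B := by
    rw [mul_div_assoc, div_self (sub_ne_zero.2 hab.ne')]; ring
  have hlvar := evar_affine hab A B
  have hlbv : BoundedVariationOn (fun x => A + (B - A) * (x - a) / (b - a)) (Icc a b) :=
    (lt_of_le_of_lt hlvar ENNReal.ofReal_lt_top).ne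
  -- nonneg of J
  have hJ0 : ∀ f : ℝ → ℝ, 0 ≤ Jfun a b h v f := by
    intro f
    have h1 : 0 ≤ ∫ x in a..b, (f x - v x) ^ 2 :=
      intervalIntegral.integral_nonneg hab.le fun x _ => sq_nonneg _
    have h2 : (0:ℝ) ≤ (eVariationOn f (Icc a b)).toReal := ENNReal.toReal_nonneg
    simp only [Jfun]
    nlinarith
  set S : Set ℝ := {r | ∃ f : ℝ → ℝ,
    (BoundedVariationOn f (Icc a b) ∧ f a = A ∧ f b = B) ∧ Jfun a b h v f = r} with hSdef
  have hSne : S.Nonempty :=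
    ⟨_, (fun x => A + (B - A) * (x - a) / (b - a)), ⟨hlbv, hla, hlb⟩, rfl⟩
  have hSbd : BddBelow S := ⟨0, by rintro r ⟨f, -, rfl⟩; exact hJ0 f⟩
  set m := sInf S with hmdef
  have hmle : ∀ f : ℝ → ℝ, (BoundedVariationOn f (Icc a b) ∧ f a = A ∧ f b = B) →
      m ≤ Jfun a b h v f := fun f hf => csInf_le hSbd ⟨f, hf, rfl⟩
  have hm0 : 0 ≤ m := le_csInf hSne (by rintro r ⟨f, -, rfl⟩; exact hJ0 f)
  -- minimizing sequence
  have hWex : ∀ n : ℕ, ∃ f : ℝ → ℝ,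
      (BoundedVariationOn f (Icc a b) ∧ f a = A ∧ f b = B) ∧
        Jfun a b h v f < m + 1 / (n + 1) := by
    intro n
    have hpos : (0:ℝ) < 1 / ((n:ℝ) + 1) := by positivity
    obtain ⟨r, ⟨f, hf, rfl⟩, hr⟩ := exists_lt_of_csInf_lt hSne
      (show m < m + 1 / ((n:ℝ) + 1) by linarith)
    exact ⟨f, hf, hr⟩
  choose W hWadm hWlt using hWex
  set M := (m + 1) / h with hMdef
  have hJW_le : ∀ n, Jfun a b h v (W n) ≤ m + 1 := by
    intro n
    have h1 : 1 / ((n:ℝ) + 1) ≤ 1 := by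
      rw [div_le_one (by positivity)]
      have : (0:ℝ) ≤ n := Nat.cast_nonneg n
      linarith
    have := hWlt n
    linarith
  have hfidW0 : ∀ n, 0 ≤ ∫ x in a..b, (W n x - v x) ^ 2 := fun n =>
    intervalIntegral.integral_nonneg hab.le fun x _ => sq_nonneg _
  have hVarW : ∀ n, (eVariationOn (W n) (Icc a b)).toReal ≤ M := by
    intro n
    have h1 := hJW_le n
    simp only [Jfun] at h1
    rw [hMdef, le_div_iff₀ hh]
    have := hfidW0 n
    nlinarith
  have hMnn : 0 ≤ M := le_trans ENNReal.toReal_nonneg (hVarW 0)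
  set C := |A| + M with hCdef
  have hWbd : ∀ n, ∀ x ∈ Icc a b, |W n x| ≤ C := by
    intro n x hx
    have h1 := bv_bound hab.le (hWadm n).1 hx
    rw [(hWadm n).2.1] at h1
    have := hVarW n
    rw [hCdef]; linarith
  -- monotone decomposition, double Helly
  have hPmono : ∀ n, MonotoneOn (fun x => variationOnFromTo (W n) (Icc a b) a x) (Icc a b) :=
    fun n => variationOnFromTo.monotoneOn (hWadm n).1.locallyBoundedVariationOn haI
  have hQmono : ∀ n,
      MonotoneOn (fun x => variationOnFromTo (W n) (Icc a b) a x - W n x) (Icc a b) :=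
    fun n => variationOnFromTo.sub_self_monotoneOn (hWadm n).1.locallyBoundedVariationOn haI
  have hPbd : ∀ n, ∀ x ∈ Icc a b, |variationOnFromTo (W n) (Icc a b) a x| ≤ M := by
    intro n x hx
    rw [variationOnFromTo.eq_of_le _ _ hx.1, abs_of_nonneg ENNReal.toReal_nonneg]
    exact le_trans
      (ENNReal.toReal_mono (hWadm n).1 (eVariationOn.mono _ inter_subset_left)) (hVarW n)
  have hQbd : ∀ n, ∀ x ∈ Icc a b,
      |variationOnFromTo (W n) (Icc a b) a x - W n x| ≤ M + C := by
    intro n x hx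
    have h1 := hPbd n x hx
    have h2 := hWbd n x hx
    have h3 : |variationOnFromTo (W n) (Icc a b) a x - W n x|
        ≤ |variationOnFromTo (W n) (Icc a b) a x| + |W n x| := abs_sub _ _
    linarith
  obtain ⟨φ₁, hφ₁, g₁, hg₁⟩ := helly_mono hab.le
    (fun n x => variationOnFromTo (W n) (Icc a b) a x) hPmono hPbd
  obtain ⟨φ₂, hφ₂, g₂, hg₂⟩ := helly_mono hab.le
    (fun n x => variationOnFromTo (W (φ₁ n)) (Icc a b) a x - W (φ₁ n) x)
    (fun n => hQmono (φ₁ n)) (fun n => hQbd (φ₁ n))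
  set φ : ℕ → ℕ := φ₁ ∘ φ₂ with hφdef
  have hφm : StrictMono φ := hφ₁.comp hφ₂
  set u : ℝ → ℝ := fun x => g₁ x - g₂ x with hudef
  have hulim : ∀ x ∈ Icc a b, Tendsto (fun n => W (φ n) x) atTop (𝓝 (u x)) := by
    intro x hx
    have h1 : Tendsto (fun n => variationOnFromTo (W (φ n)) (Icc a b) a x) atTop (𝓝 (g₁ x)) :=
      (hg₁ x hx).comp hφ₂.tendsto_atTop
    have h2 := hg₂ x hx
    have h3 := h1.sub h2
    have h4 : (fun n => variationOnFromTo (W (φ n)) (Icc a b) a x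
        - (variationOnFromTo (W (φ n)) (Icc a b) a x - W (φ n) x)) = fun n => W (φ n) x := by
      funext n; ring
    rw [hudef, ← h4]
    exact h3
  have hua : u a = A := by
    have hconst : Tendsto (fun n => W (φ n) a) atTop (𝓝 A) := by
      have he : (fun n => W (φ n) a) = fun _ => A := funext fun n => (hWadm (φ n)).2.1
      rw [he]; exact tendsto_const_nhds
    exact tendsto_nhds_unique (hulim a haI) hconst
  have hub : u b = B := by
    have hconst : Tendsto (fun n => W (φ n) b) atTop (𝓝 B) := by
      have he : (fun n => W (φ n) b) = fun _ => B := funext fun n => (hWadm (φ n)).2.2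
      rw [he]; exact tendsto_const_nhds
    exact tendsto_nhds_unique (hulim b hbI) hconst
  -- fidelity convergence
  have hfid := fid_tendsto hab hv (fun n => bv_aemeas hab.le (hWadm (φ n)).1)
    (fun n => hWbd (φ n)) hulim
  -- J converges to m
  have hJconv : Tendsto (fun n => Jfun a b h v (W (φ n))) atTop (𝓝 m) := by
    have hupper : Tendsto (fun n : ℕ => m + 1 / ((n:ℝ) + 1)) atTop (𝓝 m) := by
      have h1 : Tendsto (fun n : ℕ => 1 / ((n:ℝ) + 1)) atTop (𝓝 0) := tendsto_one_div_add_atTop_nhds_zero_nat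
      have h2 := (tendsto_const_nhds : Tendsto (fun _ : ℕ => m) atTop (𝓝 m)).add h1
      simpa using h2
    refine tendsto_of_tendsto_of_tendsto_of_le_of_le'
      (tendsto_const_nhds : Tendsto (fun _ : ℕ => m) atTop (𝓝 m)) hupper
      (Eventually.of_forall fun n => hmle _ (hWadm (φ n)))
      (Eventually.of_forall fun n => ?_)
    have h1 := (hWlt (φ n)).le
    have h2 : 1 / ((φ n : ℝ) + 1) ≤ 1 / ((n:ℝ) + 1) := by
      apply one_div_le_one_div_of_le (by positivity)
      have h3 : n ≤ φ n := hφm.le_apply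
      have h4 : (n:ℝ) ≤ (φ n : ℝ) := by exact_mod_cast h3
      linarith
    linarith
  -- variation converges
  have hVarconv : Tendsto (fun n => (eVariationOn (W (φ n)) (Icc a b)).toReal) atTop
      (𝓝 ((m - (1/2) * ∫ x in Ioo a b, (u x - v x) ^ 2) / h)) := by
    have h1 : ∀ n, (eVariationOn (W (φ n)) (Icc a b)).toReal
        = (Jfun a b h v (W (φ n)) - (1/2) * ∫ x in Ioo a b, (W (φ n) x - v x) ^ 2) / h := by
      intro n
      simp only [Jfun]
      rw [intInt_eq hab.le]
      field_simp
      ring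
    simp only [h1]
    exact (hJconv.sub (hfid.const_mul (1/2))).div_const h
  set Vinf := (m - (1/2) * ∫ x in Ioo a b, (u x - v x) ^ 2) / h with hVinfdef
  have hVinf0 : 0 ≤ Vinf := ge_of_tendsto' hVarconv fun n => ENNReal.toReal_nonneg
  have hVaru : ∀ ε : ℝ, 0 < ε → eVariationOn u (Icc a b) ≤ ENNReal.ofReal (Vinf + ε) := by
    intro ε hε
    apply evar_le_of_tendsto hulim
    have hev := hVarconv.eventually_lt_const (show Vinf < Vinf + ε by linarith)
    filter_upwards [hev] with n hn
    rw [← ENNReal.ofReal_toReal (hWadm (φ n)).1]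
    exact ENNReal.ofReal_le_ofReal hn.le
  have hubv : BoundedVariationOn u (Icc a b) :=
    (lt_of_le_of_lt (hVaru 1 one_pos) ENNReal.ofReal_lt_top).ne
  have huVar : (eVariationOn u (Icc a b)).toReal ≤ Vinf := by
    apply le_of_forall_sub_le
    intro ε hε
    have h1 := ENNReal.toReal_mono ENNReal.ofReal_ne_top (hVaru ε hε)
    rw [ENNReal.toReal_ofReal (by linarith)] at h1
    linarith
  have hJu : Jfun a b h v u ≤ m := by
    simp only [Jfun]
    rw [intInt_eq hab.le]
    have h1 : h * Vinf = m - (1/2) * ∫ x in Ioo a b, (u x - v x) ^ 2 := by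
      rw [hVinfdef]; field_simp
    have hmul := mul_le_mul_of_nonneg_left huVar hh.le
    linarith [h1, hmul]
  have humin : ∀ w : ℝ → ℝ, BoundedVariationOn w (Icc a b) → w a = A → w b = B →
      Jfun a b h v u ≤ Jfun a b h v w :=
    fun w h1 h2 h3 => hJu.trans (hmle w ⟨h1, h2, h3⟩)
  -- conclusion
  refine ⟨u, ⟨hubv, hua, hub⟩, humin, ?_, ?_⟩
  · -- TV bound
    have h1 := humin _ hlbv hla hlb
    simp only [Jfun] at h1
    have h2 : (eVariationOn (fun x => A + (B - A) * (x - a) / (b - a)) (Icc a b)).toReal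
        ≤ |B - A| := by
      have h3 := ENNReal.toReal_mono ENNReal.ofReal_ne_top hlvar
      rwa [ENNReal.toReal_ofReal (abs_nonneg _)] at h3
    have h4 : (∫ x in a..b, ((A + (B - A) * (x - a) / (b - a)) - v x) ^ 2)
        = ∫ x in a..b, (v x - (A + (B - A) * (x - a) / (b - a))) ^ 2 := by
      apply intervalIntegral.integral_congr
      intro x _
      ring
    rw [h4] at h1
    have h5 : 0 ≤ ∫ x in a..b, (u x - v x) ^ 2 :=
      intervalIntegral.integral_nonneg hab.le fun x _ => sq_nonneg _
    have h6 : 0 ≤ ∫ x in a..b, (v x - (A + (B - A) * (x - a) / (b - a))) ^ 2 :=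
      intervalIntegral.integral_nonneg hab.le fun x _ => sq_nonneg _
    rw [← mul_le_mul_iff_right₀ hh]
    have h7 : h * (|B - A| + 1 / (2 * h) *
        ∫ x in a..b, (v x - (A + (B - A) * (x - a) / (b - a))) ^ 2)
        = h * |B - A| + (1/2) *
        ∫ x in a..b, (v x - (A + (B - A) * (x - a) / (b - a))) ^ 2 := by
      field_simp
    rw [h7]
    nlinarith [h1, h2, hh.le]
  · -- uniqueness
    intro u' hu'adm hu'min
    have hJege : Jfun a b h v u' ≤ Jfun a b h v u := hu'min u hubv hua hub
    have hJele : Jfun a b h v u ≤ Jfun a b h v u' := humin u' hu'adm.1 hu'adm.2.1 hu'adm.2.2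
    -- midpoint
    have hwvar := evar_midpoint_le u' u (Icc a b)
    have hwfin : eVariationOn (fun x => (u' x + u x) / 2) (Icc a b) < ⊤ := by
      refine lt_of_le_of_lt hwvar ?_
      exact ENNReal.add_lt_top.2
        ⟨ENNReal.mul_lt_top (lt_top_iff_ne_top.2 hu'adm.1) (by simp),
         ENNReal.mul_lt_top (lt_top_iff_ne_top.2 hubv) (by simp)⟩
    have hwbv : BoundedVariationOn (fun x => (u' x + u x) / 2) (Icc a b) := hwfin.ne
    have hwa : (u' a + u a) / 2 = A := by rw [hu'adm.2.1, hua]; ring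
    have hwb : (u' b + u b) / 2 = B := by rw [hu'adm.2.2, hub]; ring
    have hwmin := humin _ hwbv hwa hwb
    -- integrability
    have hu'm : MemLp u' 2 (volume.restrict (Ioo a b)) := bv_memL2 hab.le hu'adm.1
    have hum : MemLp u 2 (volume.restrict (Ioo a b)) := bv_memL2 hab.le hubv
    have hIu' : Integrable (fun x => (u' x - v x) ^ 2) (volume.restrict (Ioo a b)) :=
      (hu'm.sub hv).integrable_sq
    have hIu : Integrable (fun x => (u x - v x) ^ 2) (volume.restrict (Ioo a b)) :=
      (hum.sub hv).integrable_sq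
    have hIuu' : Integrable (fun x => (u' x - u x) ^ 2) (volume.restrict (Ioo a b)) :=
      (hu'm.sub hum).integrable_sq
    have hfidw : ∫ x in a..b, ((u' x + u x) / 2 - v x) ^ 2
        = (1/2) * (∫ x in a..b, (u' x - v x) ^ 2) + (1/2) * (∫ x in a..b, (u x - v x) ^ 2)
          - (1/4) * ∫ x in a..b, (u' x - u x) ^ 2 := by
      simp only [intInt_eq hab.le]
      have hsum : Integrable (fun x => (1/2 : ℝ) * (u' x - v x) ^ 2 + (1/2 : ℝ) * (u x - v x) ^ 2)
          (volume.restrict (Ioo a b)) := (hIu'.const_mul _).add (hIu.const_mul _)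
      have e0 : ∫ x in Ioo a b, ((u' x + u x) / 2 - v x) ^ 2
          = ∫ x in Ioo a b, (((1/2) * (u' x - v x) ^ 2 + (1/2) * (u x - v x) ^ 2)
              - (1/4) * (u' x - u x) ^ 2) := by
        apply integral_congr_ae
        filter_upwards with x
        ring
      have e1 : ∫ x in Ioo a b, (((1/2) * (u' x - v x) ^ 2 + (1/2) * (u x - v x) ^ 2)
              - (1/4) * (u' x - u x) ^ 2)
          = (∫ x in Ioo a b, ((1/2) * (u' x - v x) ^ 2 + (1/2) * (u x - v x) ^ 2))
              - ∫ x in Ioo a b, (1/4) * (u' x - u x) ^ 2 :=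
        integral_sub hsum (hIuu'.const_mul _)
      have e2 : ∫ x in Ioo a b, ((1/2) * (u' x - v x) ^ 2 + (1/2) * (u x - v x) ^ 2)
          = (∫ x in Ioo a b, (1/2) * (u' x - v x) ^ 2)
              + ∫ x in Ioo a b, (1/2) * (u x - v x) ^ 2 :=
        integral_add (hIu'.const_mul _) (hIu.const_mul _)
      have e3 : ∫ x in Ioo a b, (1/2) * (u' x - v x) ^ 2
          = (1/2) * ∫ x in Ioo a b, (u' x - v x) ^ 2 := integral_const_mul _ _
      have e4 : ∫ x in Ioo a b, (1/2) * (u x - v x) ^ 2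
          = (1/2) * ∫ x in Ioo a b, (u x - v x) ^ 2 := integral_const_mul _ _
      have e5 : ∫ x in Ioo a b, (1/4) * (u' x - u x) ^ 2
          = (1/4) * ∫ x in Ioo a b, (u' x - u x) ^ 2 := integral_const_mul _ _
      rw [e0, e1, e2, e3, e4, e5]
    -- variation bound (real form)
    have hwvarR : (eVariationOn (fun x => (u' x + u x) / 2) (Icc a b)).toReal
        ≤ (1/2) * (eVariationOn u' (Icc a b)).toReal
          + (1/2) * (eVariationOn u (Icc a b)).toReal := by
      have hfin2 : eVariationOn u' (Icc a b) * 2⁻¹ + eVariationOn u (Icc a b) * 2⁻¹ ≠ ⊤ :=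
        (ENNReal.add_lt_top.2
          ⟨ENNReal.mul_lt_top (lt_top_iff_ne_top.2 hu'adm.1) (by simp),
           ENNReal.mul_lt_top (lt_top_iff_ne_top.2 hubv) (by simp)⟩).ne
      have hR := ENNReal.toReal_mono hfin2 hwvar
      rw [ENNReal.toReal_add
          (ENNReal.mul_lt_top (lt_top_iff_ne_top.2 hu'adm.1) (by simp)).ne
          (ENNReal.mul_lt_top (lt_top_iff_ne_top.2 hubv) (by simp)).ne,
        ENNReal.toReal_mul, ENNReal.toReal_mul] at hR
      have h2inv : (2⁻¹ : ℝ≥0∞).toReal = (2⁻¹ : ℝ) := by simp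
      rw [h2inv] at hR
      linarith
    -- combine
    have hkey : ∫ x in a..b, (u' x - u x) ^ 2 ≤ 0 := by
      have e1 := hwmin
      simp only [Jfun] at e1 hJege hJele
      rw [hfidw] at e1
      have hmul := mul_le_mul_of_nonneg_left hwvarR hh.le
      linarith [e1, hJege, hmul]
    have hIoo0 : ∫ x in Ioo a b, (u' x - u x) ^ 2 = 0 := by
      have hge : 0 ≤ ∫ x in Ioo a b, (u' x - u x) ^ 2 :=
        integral_nonneg fun x => sq_nonneg _
      have hle : ∫ x in Ioo a b, (u' x - u x) ^ 2 ≤ 0 := by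
        rw [← intInt_eq hab.le]; exact hkey
      linarith
    have hae := (integral_eq_zero_iff_of_nonneg (fun x => sq_nonneg _) hIuu').1 hIoo0
    filter_upwards [hae] with x hx
    have hx0 : (u' x - u x) ^ 2 = 0 := hx
    have hsub : u' x - u x = 0 := by
      have := sq_eq_zero_iff.1 hx0
      exact this
    exact sub_eq_zero.1 hsub
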